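/- Let g be a polynomial over ℂ with all zeros real and contained in an interval [a,b], and let α be a nonzero real number. Then every real zero z of g'−α·g satisfies a ≤ z ≤ b + n/α if α > 0, and a + n/α ≤ z ≤ b if α < 0, where n = deg g ≥ 1. -/

import Mathlib

open Polynomial

/-- Real-rooted specialization of Takagi's degree-1 proposition. -/
theorem takagi_real (g : Polynomial ℂ) (n : ℕ) (hn : 1 ≤ n) (hdeg : g.natDegree = n)
    (a b : ℝ) (hroots : ∀ w ∈ g.roots, ∃ x : ℝ, a ≤ x ∧ x ≤ b ∧ w = (x : ℂ))
    (α : ℝ) (hα : α ≠ 0) (z : ℝ)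
    (hz : (Polynomial.derivative g - Polynomial.C (α : ℂ) * g).eval (z : ℂ) = 0) :
    (0 < α → a ≤ z ∧ z ≤ b + n / α) ∧ (α < 0 → a + n / α ≤ z ∧ z ≤ b) := by
  classical
  have hg0 : g ≠ 0 := by
    intro h
    rw [h, natDegree_zero] at hdeg
    omega
  have hsplits : g.Splits := IsAlgClosed.splits g
  have hcard : g.roots.card = n := by
    rw [(splits_iff_card_roots).mp hsplits, hdeg]
  set ms : Multiset ℝ := g.roots.map Complex.re with hms
  have hmscard : ms.card = n := by simp [hms, hcard]
  have hroots' : g.roots = ms.map (fun x : ℝ => (x : ℂ)) := by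
    rw [hms, Multiset.map_map]
    conv_lhs => rw [← Multiset.map_id g.roots]
    apply Multiset.map_congr rfl
    intro w hw
    obtain ⟨x, _, _, hx⟩ := hroots w hw
    simp [hx]
  have hmem : ∀ x ∈ ms, a ≤ x ∧ x ≤ b := by
    intro x hx
    obtain ⟨w, hw, rfl⟩ := Multiset.mem_map.mp hx
    obtain ⟨y, h1, h2, hy⟩ := hroots w hw
    rw [hy, Complex.ofReal_re]
    exact ⟨h1, h2⟩
  set p : Polynomial ℝ := (ms.map fun x => X - C x).prod with hp
  have hgp : g = C g.leadingCoeff * p.map (algebraMap ℝ ℂ) := by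
    conv_lhs => rw [hsplits.eq_prod_roots]
    congr 1
    rw [hp, Polynomial.map_multiset_prod, Multiset.map_map, hroots', Multiset.map_map]
    exact congrArg Multiset.prod (Multiset.map_congr rfl (by intro x _; simp))
  have hc0 : g.leadingCoeff ≠ 0 := leadingCoeff_ne_zero.mpr hg0
  have heval : ∀ q : Polynomial ℝ, (q.map (algebraMap ℝ ℂ)).eval (z : ℂ)
      = ((q.eval z : ℝ) : ℂ) := by
    intro q
    rw [Polynomial.eval_map]
    have : ((z : ℝ) : ℂ) = algebraMap ℝ ℂ z := rfl
    rw [this, Polynomial.eval₂_at_apply]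
    rfl
  -- real equation
  have heq : p.derivative.eval z = α * p.eval z := by
    have h1 : (Polynomial.derivative g).eval (z : ℂ)
        = g.leadingCoeff * ((p.derivative.eval z : ℝ) : ℂ) := by
      conv_lhs => rw [hgp]
      rw [derivative_C_mul, eval_mul, eval_C, derivative_map, heval]
    have h2 : g.eval (z : ℂ) = g.leadingCoeff * ((p.eval z : ℝ) : ℂ) := by
      conv_lhs => rw [hgp]
      rw [eval_mul, eval_C, heval]
    rw [eval_sub, eval_mul, eval_C, h1, h2, sub_eq_zero] at hz
    have h3 : g.leadingCoeff * ((p.derivative.eval z : ℝ) : ℂ)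
        = g.leadingCoeff * (((α * p.eval z : ℝ)) : ℂ) := by
      push_cast
      linear_combination hz
    have h4 := mul_left_cancel₀ hc0 h3
    exact_mod_cast h4
  have hnpos : (0 : ℝ) < n := by exact_mod_cast hn
  by_cases hzm : z ∈ ms
  · obtain ⟨ha, hb⟩ := hmem z hzm
    constructor
    · intro hαpos
      refine ⟨ha, hb.trans ?_⟩
      have : 0 < (n : ℝ) / α := div_pos hnpos hαpos
      linarith
    · intro hαneg
      refine ⟨?_, hb⟩
      have : (n : ℝ) / α < 0 := div_neg_of_pos_of_neg hnpos hαneg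
      linarith
  · have hne : ∀ x ∈ ms, z - x ≠ 0 := by
      intro x hx h
      exact hzm (by rwa [sub_eq_zero.mp h])
    have hpz : p.eval z = (ms.map fun x => z - x).prod := by
      rw [hp, eval_multiset_prod, Multiset.map_map]
      apply congrArg
      apply Multiset.map_congr rfl
      intro x _
      simp
    have hpz0 : p.eval z ≠ 0 := by
      rw [hpz]
      apply Multiset.prod_ne_zero
      intro h0
      obtain ⟨x, hx, hx0⟩ := Multiset.mem_map.mp h0
      exact hne x hx hx0
    have hp' : p.derivative.eval z
        = (ms.map fun x => ((ms.erase x).map fun y => z - y).prod).sum := by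
      rw [hp, derivative_prod]
      rw [← Polynomial.coe_evalRingHom, map_multiset_sum, Multiset.map_map]
      apply congrArg
      apply Multiset.map_congr rfl
      intro x hx
      simp [eval_multiset_prod, Multiset.map_map]
    set S : ℝ := (ms.map fun x => (z - x)⁻¹).sum with hS
    have hkey : p.eval z * S = p.derivative.eval z := by
      rw [hS, ← Multiset.sum_map_mul_left, hp']
      apply congrArg
      apply Multiset.map_congr rfl
      intro x hx
      have h1 : (ms.map fun y => z - y).prod
          = (z - x) * ((ms.erase x).map fun y => z - y).prod :=
        (Multiset.prod_map_erase hx).symm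
      rw [hpz, h1, mul_comm (z - x), mul_assoc, mul_inv_cancel₀ (hne x hx), mul_one]
    have hSα : S = α := by
      have : p.eval z * S = p.eval z * α := by
        rw [hkey, heq, mul_comm]
      exact mul_left_cancel₀ hpz0 this
    constructor
    · intro hαpos
      constructor
      · by_contra h
        push_neg at h
        have hS0 : S ≤ 0 := by
          rw [hS]
          calc (ms.map fun x => (z - x)⁻¹).sum
              ≤ (ms.map fun _ => (0 : ℝ)).sum := by
                apply Multiset.sum_map_le_sum_map
                intro x hx
                have := (hmem x hx).1
                have hzx : z - x < 0 := by linarith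
                exact le_of_lt (inv_lt_zero.mpr hzx)
            _ = 0 := by simp
        linarith [hSα ▸ hS0]
      · by_contra h
        push_neg at h
        have hzb : 0 < z - b := by
          have : 0 < (n : ℝ) / α := div_pos hnpos hαpos
          linarith
        have hbound : S ≤ (n : ℝ) * (z - b)⁻¹ := by
          rw [hS]
          calc (ms.map fun x => (z - x)⁻¹).sum
              ≤ (ms.map fun _ => (z - b)⁻¹).sum := by
                apply Multiset.sum_map_le_sum_map
                intro x hx
                have hxb := (hmem x hx).2
                apply inv_anti₀ hzb
                linarith
            _ = (n : ℝ) * (z - b)⁻¹ := by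
                rw [Multiset.map_const', Multiset.sum_replicate, hmscard, nsmul_eq_mul]
        have hlt : (n : ℝ) * (z - b)⁻¹ < α := by
          have h1 : (n : ℝ) / α < z - b := by linarith
          have h2 : (z - b)⁻¹ < α / n := by
            rw [← one_div, div_lt_div_iff₀ hzb hnpos] at *
            have : (n : ℝ) / α * α = n := div_mul_cancel₀ _ hα
            nlinarith [div_pos hnpos hαpos]
          calc (n : ℝ) * (z - b)⁻¹ < n * (α / n) := by
                exact mul_lt_mul_of_pos_left h2 hnpos
            _ = α := by field_simp
        linarith [hSα ▸ hbound]
    · intro hαneg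
      constructor
      · by_contra h
        push_neg at h
        have hna : (n : ℝ) / α < 0 := div_neg_of_pos_of_neg hnpos hαneg
        have hza : z - a < (n : ℝ) / α := by linarith
        have hza0 : z - a < 0 := by linarith
        have hbound : (n : ℝ) * (z - a)⁻¹ ≤ S := by
          rw [hS]
          calc (n : ℝ) * (z - a)⁻¹
              = (ms.map fun _ => (z - a)⁻¹).sum := by
                rw [Multiset.map_const', Multiset.sum_replicate, hmscard, nsmul_eq_mul]
            _ ≤ (ms.map fun x => (z - x)⁻¹).sum := by
                apply Multiset.sum_map_le_sum_map
                intro x hx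
                have hax := (hmem x hx).1
                have h1 : z - x ≤ z - a := by linarith
                have h2 : z - x < 0 := by linarith
                rw [inv_le_inv_of_neg hza0 h2]
                exact h1
        have hgt : α < (n : ℝ) * (z - a)⁻¹ := by
          have h2 : α / n < (z - a)⁻¹ := by
            have hinv : ((n : ℝ) / α)⁻¹ < (z - a)⁻¹ :=
              (inv_lt_inv_of_neg hna hza0).mpr hza
            rwa [inv_div, div_eq_mul_inv] at hinv
          calc α = n * (α / n) := by field_simp
            _ < n * (z - a)⁻¹ := mul_lt_mul_of_pos_left h2 hnpos
        linarith [hSα ▸ hbound]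
      · by_contra h
        push_neg at h
        have hS0 : 0 ≤ S := by
          rw [hS]
          apply Multiset.sum_nonneg
          intro t ht
          obtain ⟨x, hx, rfl⟩ := Multiset.mem_map.mp ht
          have := (hmem x hx).2
          have : 0 < z - x := by linarith
          exact le_of_lt (inv_pos.mpr this)
        linarith [hSα ▸ hS0]
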